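/- Assume conditions (A1) and (A3). Let Q be an observed family of distributions satisfying the Markov condition X1−Y1−Y2, condition (C0), and condition (C1). Then for all y1, y2 ∈ 𝒴, x1 ∈ 𝒳_{y1}, and x2 ∈ 𝒳_{y2}: P(x1|y1) = Tr(E_{x1|y1}·ρ1[P]) and P(x2|x1,y1,y2) = Tr((E_{x1|y1} ⊗ E_{x2|y2})·(Ĉ[P])^{T1}). Consequently Q(x1,x2|y1,y2) = Tr(E_{x1|y1}·ρ1[P]) · Tr((E_{x1|y1} ⊗ E_{x2|y2})·(Ĉ[P])^{T1}), i.e., the observed distribution is exactly reproduced by the reconstructed pair (ρ1[P], Ĉ[P]). -/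

import Mathlib

open Matrix Kronecker ComplexOrder BigOperators

noncomputable section

/-- The rank-one projection |v⟩⟨v| associated with a vector v ∈ ℂ^d. -/
def outer {d : ℕ} (v : Fin d → ℂ) : Matrix (Fin d) (Fin d) ℂ :=
  Matrix.vecMulVec v (star v)

/-- Partial trace over the first tensor factor. -/
def ptrace1 {d : ℕ} (C : Matrix (Fin d × Fin d) (Fin d × Fin d) ℂ) :
    Matrix (Fin d) (Fin d) ℂ :=
  Matrix.of fun j j' => ∑ i : Fin d, C (i, j) (i, j')

/-- Partial trace over the second tensor factor. -/
def ptrace2 {d : ℕ} (C : Matrix (Fin d × Fin d) (Fin d × Fin d) ℂ) :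
    Matrix (Fin d) (Fin d) ℂ :=
  Matrix.of fun i i' => ∑ j : Fin d, C (i, j) (i', j)

/-- Partial transpose on the first tensor factor. -/
def ptranspose1 {d : ℕ} (C : Matrix (Fin d × Fin d) (Fin d × Fin d) ℂ) :
    Matrix (Fin d × Fin d) (Fin d × Fin d) ℂ :=
  Matrix.of fun p q => C (q.1, p.2) (p.1, q.2)

/-- The channel Λ_C(ρ) := Tr₁[C^{T1}(ρ⊗I)] associated with a Choi matrix C. -/
def chan {d : ℕ} (C : Matrix (Fin d × Fin d) (Fin d × Fin d) ℂ)
    (ρ : Matrix (Fin d) (Fin d) ℂ) : Matrix (Fin d) (Fin d) ℂ :=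
  ptrace1 (ptranspose1 C * (ρ ⊗ₖ (1 : Matrix (Fin d) (Fin d) ℂ)))

/-- The family G_t: G_0 = I and G_{(y,z)} = Σ_x g_{x|y,z}·E_{x|y}. -/
def Gfam {d : ℕ} {Y : Type*} [Fintype Y] (w : Y → Fin d → Fin d → ℂ)
    (g : Y → Fin d → Fin (d - 1) → ℝ) : Option (Y × Fin (d - 1)) → Matrix (Fin d) (Fin d) ℂ
  | none => 1
  | some (y, z) => ∑ x : Fin d, (g y x z : ℂ) • outer (w y x)

/-- The coefficients g_{x|t}, with g_{x|0} := 1. -/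
def gfam {d : ℕ} {Y : Type*} (g : Y → Fin d → Fin (d - 1) → ℝ) :
    Option (Y × Fin (d - 1)) → Fin d → ℝ
  | none, _ => 1
  | some (y, z), x => g y x z

/-- The measurement label y(t), with y(0) replaced by a fixed element y₀. -/
def yOf {d : ℕ} {Y : Type*} (y₀ : Y) : Option (Y × Fin (d - 1)) → Y
  | none => y₀
  | some (y, _) => y

/-- Single-site statistics P(x1|y1) = ⟨x1,y1|ρ1|x1,y1⟩. -/
def P1 {d : ℕ} {Y : Type*} (w : Y → Fin d → Fin d → ℂ) (ρ1 : Matrix (Fin d) (Fin d) ℂ)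
    (x1 : Fin d) (y1 : Y) : ℂ :=
  star (w y1 x1) ⬝ᵥ ρ1.mulVec (w y1 x1)

/-- Two-site statistics P(x2|x1,y1,y2) = ⟨x2,y2|Λ_C(|x1,y1⟩⟨x1,y1|)|x2,y2⟩. -/
def P2 {d : ℕ} {Y : Type*} (w : Y → Fin d → Fin d → ℂ)
    (C : Matrix (Fin d × Fin d) (Fin d × Fin d) ℂ)
    (x2 : Fin d) (y2 : Y) (x1 : Fin d) (y1 : Y) : ℂ :=
  star (w y2 x2) ⬝ᵥ (chan C (outer (w y1 x1))).mulVec (w y2 x2)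

/-- Statistics with trivial first measurement: P(x2|0,y2) = ⟨x2,y2|Λ_C(ρ1)|x2,y2⟩. -/
def P20 {d : ℕ} {Y : Type*} (w : Y → Fin d → Fin d → ℂ)
    (ρ1 : Matrix (Fin d) (Fin d) ℂ) (C : Matrix (Fin d × Fin d) (Fin d × Fin d) ℂ)
    (x2 : Fin d) (y2 : Y) : ℂ :=
  star (w y2 x2) ⬝ᵥ (chan C ρ1).mulVec (w y2 x2)

/-- The reconstructed Choi matrix Ĉ[P] built from abstract statistics
(p1, p2, p20), the coefficients g, the dual basis H, and a fixed label y₀. -/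
def ChatP {d : ℕ} {Y : Type*} [Fintype Y] [DecidableEq Y] (y₀ : Y)
    (g : Y → Fin d → Fin (d - 1) → ℝ)
    (H : Option (Y × Fin (d - 1)) → Matrix (Fin d) (Fin d) ℂ)
    (p1 : Fin d → Y → ℂ)
    (p2 : Fin d → Y → Fin d → Y → ℂ)
    (p20 : Fin d → Y → ℂ) : Matrix (Fin d × Fin d) (Fin d × Fin d) ℂ :=
  (∑ t1 : Y × Fin (d - 1), ∑ t2 : Option (Y × Fin (d - 1)),
      (∑ x1 : Fin d, ∑ x2 : Fin d,
          (g t1.1 x1 t1.2 : ℂ) * (gfam g t2 x2 : ℂ) * p2 x2 (yOf y₀ t2) x1 t1.1)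
        • ((H (some t1)).transpose ⊗ₖ H t2))
  + (∑ t2 : Option (Y × Fin (d - 1)),
      ((∑ x2 : Fin d, (gfam g t2 x2 : ℂ) * p20 x2 (yOf y₀ t2))
        - ∑ t1 : Y × Fin (d - 1), ∑ t1' : Y × Fin (d - 1),
            (∑ x1 : Fin d, (g t1.1 x1 t1.2 : ℂ) * p1 x1 t1.1)
              * (H (some t1) * H (some t1')).trace
              * (∑ x1' : Fin d, ∑ x2 : Fin d,
                  (g t1'.1 x1' t1'.2 : ℂ) * (gfam g t2 x2 : ℂ) * p2 x2 (yOf y₀ t2) x1' t1'.1))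
        • ((1 : Matrix (Fin d) (Fin d) ℂ) ⊗ₖ H t2))

end

noncomputable section

/-- Outcome spaces: 𝒳_0 = {0} is a singleton for the trivial measurement, and
𝒳_y = Fin d for y ∈ 𝒴. -/
def XSp (d : ℕ) (Y : Type*) : Option Y → Type
  | none => PUnit
  | some _ => Fin d

instance {d : ℕ} {Y : Type*} : ∀ o : Option Y, Fintype (XSp d Y o)
  | none => inferInstanceAs (Fintype PUnit)
  | some _ => inferInstanceAs (Fintype (Fin d))

/-- The marginal m(x1|y1), computed with the trivial second measurement. -/
def marg {d : ℕ} {Y : Type*} (Q : ∀ y1 y2 : Option Y, XSp d Y y1 → XSp d Y y2 → ℝ)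
    (y1 : Option Y) (x1 : XSp d Y y1) : ℝ :=
  ∑ x2 : XSp d Y none, Q y1 none x1 x2

/-- The reconstructed state ρ1[P] := Σ_t c_t·H_t, with c_0 = 1 and
c_{(y,z)} = Σ_{x1} g_{x1|y,z}·P(x1|y). -/
def rho1P {d : ℕ} {Y : Type*} [Fintype Y]
    (g : Y → Fin d → Fin (d - 1) → ℝ)
    (H : Option (Y × Fin (d - 1)) → Matrix (Fin d) (Fin d) ℂ)
    (p1 : Fin d → Y → ℝ) : Matrix (Fin d) (Fin d) ℂ :=
  H none + ∑ t : Y × Fin (d - 1),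
    ((∑ x1 : Fin d, g t.1 x1 t.2 * p1 x1 t.1 : ℝ) : ℂ) • H (some t)

end

noncomputable section
namespace Stmt18Aux

variable {d : ℕ} {Y : Type*} [Fintype Y] [DecidableEq Y]

lemma trace_outer_mul (v : Fin d → ℂ) (M : Matrix (Fin d) (Fin d) ℂ) :
    (outer v * M).trace = star v ⬝ᵥ M.mulVec v := by
  simp only [outer, Matrix.trace, Matrix.diag_apply, Matrix.mul_apply,
    Matrix.vecMulVec_apply, dotProduct, Matrix.mulVec, Pi.star_apply]
  rw [Finset.sum_comm]
  refine Finset.sum_congr rfl fun j _ => ?_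
  rw [Finset.mul_sum]
  refine Finset.sum_congr rfl fun i _ => ?_
  ring

lemma sum_outer_eq_one (w : Fin d → Fin d → ℂ)
    (horth : ∀ x x', star (w x) ⬝ᵥ w x' = if x = x' then 1 else 0) :
    ∑ x, outer (w x) = 1 := by
  have h1 : (Matrix.of fun x i => star (w x i)) * (Matrix.of fun x i => star (w x i))ᴴ
      = (1 : Matrix (Fin d) (Fin d) ℂ) := by
    ext x x'
    have := horth x x'
    simp only [dotProduct, Pi.star_apply] at this
    simp only [Matrix.mul_apply, Matrix.conjTranspose_apply, Matrix.of_apply,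
      Matrix.one_apply, star_star]
    simpa using this
  have h2 := (mul_eq_one_comm).mp h1
  ext i j
  have := congrFun (congrFun h2 i) j
  simp only [Matrix.mul_apply, Matrix.conjTranspose_apply, Matrix.of_apply, star_star] at this
  simp only [Matrix.sum_apply, outer, Matrix.vecMulVec_apply, Pi.star_apply]
  rw [← this]

lemma trace_mul_sum_smul {ι : Type*} [Fintype ι] (A : Matrix (Fin d) (Fin d) ℂ)
    (φ : ι → ℂ) (H : ι → Matrix (Fin d) (Fin d) ℂ) :
    (A * ∑ t, φ t • H t).trace = ∑ t, φ t * (A * H t).trace := by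
  rw [Matrix.mul_sum, Matrix.trace_sum]
  simp_rw [Matrix.mul_smul, Matrix.trace_smul, smul_eq_mul]

variable (w : Y → Fin d → Fin d → ℂ) (g : Y → Fin d → Fin (d - 1) → ℝ)
  (H : Option (Y × Fin (d - 1)) → Matrix (Fin d) (Fin d) ℂ)

lemma trace_G_sum_smul
    (hdual : ∀ t t', (Gfam w g t' * H t).trace = if t = t' then 1 else 0)
    (t' : Option (Y × Fin (d - 1))) (φ : Option (Y × Fin (d - 1)) → ℂ) :
    (Gfam w g t' * ∑ t, φ t • H t).trace = φ t' := by
  rw [trace_mul_sum_smul]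
  simp_rw [hdual]
  simp

end Stmt18Aux
end

noncomputable section
namespace Stmt18Aux

lemma lemA {d : ℕ} (hd : 2 ≤ d) {Y : Type*} [Fintype Y] [DecidableEq Y]
    (w : Y → Fin d → Fin d → ℂ) (g : Y → Fin d → Fin (d - 1) → ℝ)
    (H : Option (Y × Fin (d - 1)) → Matrix (Fin d) (Fin d) ℂ)
    (horth : ∀ y (x x' : Fin d), star (w y x) ⬝ᵥ w y x' = if x = x' then 1 else 0)
    (hdual : ∀ t t', (Gfam w g t' * H t).trace = if t = t' then 1 else 0)
    (y : Y) (a p : Fin d → ℂ)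
    (h0 : ∑ x, a x = ∑ x, p x)
    (hz : ∀ z, ∑ x, (g y x z : ℂ) * a x = ∑ x, (g y x z : ℂ) * p x) :
    a = p := by
  classical
  have hsum : ∑ x, outer (w y x) = 1 := sum_outer_eq_one (w y) (horth y)
  set u : Option (Fin (d - 1)) → Fin d → ℂ :=
    fun t x => ((gfam g (t.map fun z => (y, z)) x : ℝ) : ℂ) with hu
  have hτinj : Function.Injective (fun t : Option (Fin (d-1)) => t.map fun z => (y, z)) :=
    Option.map_injective (fun z z' h => (Prod.mk.injEq _ _ _ _).mp h |>.2)
  have hGrep : ∀ t : Option (Fin (d - 1)),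
      Gfam w g (t.map fun z => (y, z)) = ∑ x, u t x • outer (w y x) := by
    intro t
    cases t with
    | none => simpa [hu, Gfam, gfam] using hsum.symm
    | some z => simp [hu, Gfam, gfam]
  have hind : LinearIndependent ℂ u := by
    rw [Fintype.linearIndependent_iff]
    intro l hl t0
    have hco : ∀ x : Fin d, ∑ t, l t * u t x = 0 := by
      intro x
      have := congrFun hl x
      simpa [Finset.sum_apply, Pi.smul_apply, smul_eq_mul] using this
    have hS : (∑ t, l t • Gfam w g (t.map fun z => (y, z))) = 0 := by
      calc (∑ t, l t • Gfam w g (t.map fun z => (y, z)))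
          = ∑ t, ∑ x, (l t * u t x) • outer (w y x) := by
            simp_rw [hGrep, Finset.smul_sum, smul_smul]
        _ = ∑ x, (∑ t, l t * u t x) • outer (w y x) := by
            rw [Finset.sum_comm]; simp_rw [Finset.sum_smul]
        _ = 0 := by simp [hco]
    have htr := congrArg (fun M => (M * H (Option.map (fun z => (y, z)) t0)).trace) hS
    simp only [Matrix.sum_mul, Matrix.trace_sum, Matrix.smul_mul, Matrix.trace_smul,
      Matrix.zero_mul, Matrix.trace_zero, smul_eq_mul, hdual] at htr
    simpa [hτinj.eq_iff, eq_comm] using htr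
  have hcard : Fintype.card (Option (Fin (d - 1))) = d := by
    simp only [Fintype.card_option, Fintype.card_fin]; omega
  have hfr : Fintype.card (Option (Fin (d - 1))) = Module.finrank ℂ (Fin d → ℂ) := by
    rw [hcard]; simp [Module.finrank_pi]
  let B : Module.Basis (Option (Fin (d - 1))) ℂ (Fin d → ℂ) :=
    basisOfLinearIndependentOfCardEqFinrank hind hfr
  have hB : ∀ t, B t = u t := fun t =>
    congrFun (coe_basisOfLinearIndependentOfCardEqFinrank hind hfr) t
  let φ : (Fin d → ℂ) →ₗ[ℂ] ℂ :=
    { toFun := fun c => ∑ x, c x * (a x - p x)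
      map_add' := by intro c c'; simp [add_mul, Finset.sum_add_distrib]
      map_smul' := by intro r c; simp [mul_assoc, Finset.mul_sum]
      }
  have hφu : ∀ t, φ (u t) = 0 := by
    intro t
    cases t with
    | none =>
      have : ∑ x, a x - ∑ x, p x = 0 := sub_eq_zero.mpr h0
      simpa [φ, hu, gfam, mul_sub, Finset.sum_sub_distrib] using this
    | some z =>
      have : (∑ x, (g y x z : ℂ) * a x) - ∑ x, (g y x z : ℂ) * p x = 0 := sub_eq_zero.mpr (hz z)
      simpa [φ, hu, gfam, mul_sub, Finset.sum_sub_distrib] using this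
  have hφ : φ = 0 := B.ext fun t => by rw [hB t, hφu t]; simp
  funext x
  have hx := congrArg (fun ψ : (Fin d → ℂ) →ₗ[ℂ] ℂ => ψ (Pi.single x 1)) hφ
  simp only [φ, LinearMap.coe_mk, AddHom.coe_mk, LinearMap.zero_apply, Pi.single_apply] at hx
  rw [Finset.sum_eq_single x (by intro b _ hb; simp [hb]) (by simp)] at hx
  simp only [if_true, one_mul] at hx
  exact sub_eq_zero.mp hx

end Stmt18Aux
end

noncomputable section
namespace Stmt18Aux

lemma lemC {d : ℕ} (hd : 2 ≤ d) {Y : Type*} [Fintype Y] [DecidableEq Y]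
    (w : Y → Fin d → Fin d → ℂ) (g : Y → Fin d → Fin (d - 1) → ℝ)
    (H : Option (Y × Fin (d - 1)) → Matrix (Fin d) (Fin d) ℂ)
    (horth : ∀ y (x x' : Fin d), star (w y x) ⬝ᵥ w y x' = if x = x' then 1 else 0)
    (hdual : ∀ t t', (Gfam w g t' * H t).trace = if t = t' then 1 else 0)
    (y : Y) (φ : Option (Y × Fin (d - 1)) → ℂ) (p : Fin d → ℂ)
    (h0 : φ none = ∑ x, p x)
    (hz : ∀ z, φ (some (y, z)) = ∑ x, (g y x z : ℂ) * p x) :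
    ∀ x, (outer (w y x) * ∑ t, φ t • H t).trace = p x := by
  have key : (fun x => (outer (w y x) * ∑ t, φ t • H t).trace) = p := by
    apply lemA hd w g H horth hdual y
    · have h1 : ∑ x, (outer (w y x) * ∑ t, φ t • H t).trace
          = (∑ t, φ t • H t).trace := by
        rw [← Matrix.trace_sum, ← Matrix.sum_mul, sum_outer_eq_one (w y) (horth y),
          Matrix.one_mul]
      have h2 := trace_G_sum_smul w g H hdual none φ
      rw [show Gfam w g none = 1 from rfl, Matrix.one_mul] at h2
      rw [h1, h2, h0]
    · intro z
      have h1 : ∑ x, (g y x z : ℂ) * (outer (w y x) * ∑ t, φ t • H t).trace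
          = (Gfam w g (some (y, z)) * ∑ t, φ t • H t).trace := by
        show _ = ((∑ x, (g y x z : ℂ) • outer (w y x)) * _).trace
        rw [Matrix.sum_mul, Matrix.trace_sum]
        simp_rw [Matrix.smul_mul, Matrix.trace_smul, smul_eq_mul]
      rw [h1, trace_G_sum_smul w g H hdual, hz z]
  exact fun x => congrFun key x

lemma Hnone_eq {d : ℕ} (hd : 2 ≤ d) {Y : Type*} [Fintype Y] [DecidableEq Y]
    (w : Y → Fin d → Fin d → ℂ) (g : Y → Fin d → Fin (d - 1) → ℝ)
    (H : Option (Y × Fin (d - 1)) → Matrix (Fin d) (Fin d) ℂ)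
    (htraceless : ∀ y z, (Gfam w g (some (y, z))).trace = 0)
    (hcomplete : ∀ M : Matrix (Fin d) (Fin d) ℂ, M.IsHermitian →
      M = ∑ t : Option (Y × Fin (d - 1)), (Gfam w g t * M).trace • H t) :
    H none = ((d : ℂ)⁻¹) • (1 : Matrix (Fin d) (Fin d) ℂ) := by
  have hdne : (d : ℂ) ≠ 0 := by
    simp only [ne_eq, Nat.cast_eq_zero]; omega
  have herm : (((d : ℂ)⁻¹) • (1 : Matrix (Fin d) (Fin d) ℂ)).IsHermitian := by
    unfold Matrix.IsHermitian
    rw [Matrix.conjTranspose_smul, Matrix.conjTranspose_one]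
    congr 1
    simp [Complex.ext_iff]
  have h := hcomplete _ herm
  have htr : ∀ t, (Gfam w g t * ((d : ℂ)⁻¹ • (1 : Matrix (Fin d) (Fin d) ℂ))).trace
      = if t = none then (d : ℂ)⁻¹ * d else 0 := by
    intro t
    rw [Matrix.mul_smul, Matrix.mul_one, Matrix.trace_smul, smul_eq_mul]
    cases t with
    | none =>
      simp [Gfam, Matrix.trace_one]
    | some yz =>
      obtain ⟨y, z⟩ := yz
      rw [htraceless y z]
      simp
  rw [h]
  simp_rw [htr]
  rw [Fintype.sum_option]
  simp [inv_mul_cancel₀ hdne]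

end Stmt18Aux
end

noncomputable section
namespace Stmt18Aux

lemma main1 {d : ℕ} (hd : 2 ≤ d) {Y : Type*} [Fintype Y] [DecidableEq Y]
    (w : Y → Fin d → Fin d → ℂ) (g : Y → Fin d → Fin (d - 1) → ℝ)
    (H : Option (Y × Fin (d - 1)) → Matrix (Fin d) (Fin d) ℂ)
    (horth : ∀ y (x x' : Fin d), star (w y x) ⬝ᵥ w y x' = if x = x' then 1 else 0)
    (hdual : ∀ t t', (Gfam w g t' * H t).trace = if t = t' then 1 else 0)
    (p1 : Fin d → Y → ℝ)
    (hp1 : ∀ y, ∑ x, p1 x y = 1) :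
    ∀ y x, ((p1 x y : ℝ) : ℂ) = (outer (w y x) * rho1P g H p1).trace := by
  intro y x
  set φ : Option (Y × Fin (d - 1)) → ℂ := fun t =>
    match t with
    | none => 1
    | some t => ((∑ x1, g t.1 x1 t.2 * p1 x1 t.1 : ℝ) : ℂ) with hφ
  have hrho : rho1P g H p1 = ∑ t, φ t • H t := by
    rw [Fintype.sum_option]
    simp [rho1P, hφ]
  rw [hrho]
  refine (lemC hd w g H horth hdual y φ (fun x' => ((p1 x' y : ℝ) : ℂ)) ?_ ?_ x).symm
  · show (1 : ℂ) = _
    rw [← Complex.ofReal_sum, hp1 y, Complex.ofReal_one]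
  · intro z
    show ((∑ x1, g y x1 z * p1 x1 y : ℝ) : ℂ) = _
    push_cast
    rfl

lemma ptranspose1_add {d : ℕ} (C D : Matrix (Fin d × Fin d) (Fin d × Fin d) ℂ) :
    ptranspose1 (C + D) = ptranspose1 C + ptranspose1 D := by
  ext p q; simp [ptranspose1]

lemma ptranspose1_smul {d : ℕ} (c : ℂ) (C : Matrix (Fin d × Fin d) (Fin d × Fin d) ℂ) :
    ptranspose1 (c • C) = c • ptranspose1 C := by
  ext p q; simp [ptranspose1]

lemma ptranspose1_sum {d : ℕ} {ι : Type*} (s : Finset ι)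
    (f : ι → Matrix (Fin d × Fin d) (Fin d × Fin d) ℂ) :
    ptranspose1 (∑ i ∈ s, f i) = ∑ i ∈ s, ptranspose1 (f i) := by
  ext p q; simp [ptranspose1, Finset.sum_apply, Matrix.sum_apply]

lemma ptranspose1_kron {d : ℕ} (M N : Matrix (Fin d) (Fin d) ℂ) :
    ptranspose1 (Mᵀ ⊗ₖ N) = M ⊗ₖ N := by
  ext p q
  simp [ptranspose1, Matrix.kroneckerMap_apply, Matrix.transpose_apply]

lemma ptranspose1_one_kron {d : ℕ} (N : Matrix (Fin d) (Fin d) ℂ) :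
    ptranspose1 ((1 : Matrix (Fin d) (Fin d) ℂ) ⊗ₖ N) = 1 ⊗ₖ N := by
  rw [← Matrix.transpose_one (α := ℂ) (n := Fin d), ptranspose1_kron, Matrix.transpose_one]

end Stmt18Aux
end

noncomputable section
namespace Stmt18Aux

variable {d : ℕ} {Y : Type*} [Fintype Y] [DecidableEq Y]

def Gam (y₀ : Y) (g : Y → Fin d → Fin (d - 1) → ℝ) (p2 : Fin d → Y → Fin d → Y → ℂ)
    (t1 : Y × Fin (d - 1)) (t2 : Option (Y × Fin (d - 1))) : ℂ :=
  ∑ x1 : Fin d, ∑ x2 : Fin d,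
    (g t1.1 x1 t1.2 : ℂ) * (gfam g t2 x2 : ℂ) * p2 x2 (yOf y₀ t2) x1 t1.1

def cC (g : Y → Fin d → Fin (d - 1) → ℝ) (p1 : Fin d → Y → ℂ) (t1 : Y × Fin (d - 1)) : ℂ :=
  ∑ x1 : Fin d, (g t1.1 x1 t1.2 : ℂ) * p1 x1 t1.1

def nC (y₀ : Y) (g : Y → Fin d → Fin (d - 1) → ℝ) (p20 : Fin d → Y → ℂ)
    (t2 : Option (Y × Fin (d - 1))) : ℂ :=
  ∑ x2 : Fin d, (gfam g t2 x2 : ℂ) * p20 x2 (yOf y₀ t2)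

def Del (y₀ : Y) (g : Y → Fin d → Fin (d - 1) → ℝ)
    (H : Option (Y × Fin (d - 1)) → Matrix (Fin d) (Fin d) ℂ)
    (p1 : Fin d → Y → ℂ) (p2 : Fin d → Y → Fin d → Y → ℂ) (p20 : Fin d → Y → ℂ)
    (t2 : Option (Y × Fin (d - 1))) : ℂ :=
  nC y₀ g p20 t2 - ∑ t1 : Y × Fin (d - 1), ∑ t1' : Y × Fin (d - 1),
    cC g p1 t1 * (H (some t1) * H (some t1')).trace * Gam y₀ g p2 t1' t2

lemma ChatP_eq (y₀ : Y) (g : Y → Fin d → Fin (d - 1) → ℝ)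
    (H : Option (Y × Fin (d - 1)) → Matrix (Fin d) (Fin d) ℂ)
    (p1 : Fin d → Y → ℂ) (p2 : Fin d → Y → Fin d → Y → ℂ) (p20 : Fin d → Y → ℂ) :
    ChatP y₀ g H p1 p2 p20
      = (∑ t1 : Y × Fin (d - 1), ∑ t2 : Option (Y × Fin (d - 1)),
          Gam y₀ g p2 t1 t2 • ((H (some t1))ᵀ ⊗ₖ H t2))
        + ∑ t2 : Option (Y × Fin (d - 1)),
          Del y₀ g H p1 p2 p20 t2 • ((1 : Matrix (Fin d) (Fin d) ℂ) ⊗ₖ H t2) := rfl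

end Stmt18Aux
end

noncomputable section
namespace Stmt18Aux

lemma trace_outer_eq_one {d : ℕ} (v : Fin d → ℂ) (hv : star v ⬝ᵥ v = 1) :
    (outer v).trace = 1 := by
  have := trace_outer_mul v 1
  rw [Matrix.mul_one, Matrix.one_mulVec] at this
  rw [this, hv]

lemma main2 {d : ℕ} (hd : 2 ≤ d) {Y : Type*} [Fintype Y] [DecidableEq Y] (y₀ : Y)
    (w : Y → Fin d → Fin d → ℂ) (g : Y → Fin d → Fin (d - 1) → ℝ)
    (H : Option (Y × Fin (d - 1)) → Matrix (Fin d) (Fin d) ℂ)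
    (horth : ∀ y (x x' : Fin d), star (w y x) ⬝ᵥ w y x' = if x = x' then 1 else 0)
    (htraceless : ∀ y z, (Gfam w g (some (y, z))).trace = 0)
    (hdual : ∀ t t', (Gfam w g t' * H t).trace = if t = t' then 1 else 0)
    (hcomplete : ∀ M : Matrix (Fin d) (Fin d) ℂ, M.IsHermitian →
      M = ∑ t : Option (Y × Fin (d - 1)), (Gfam w g t * M).trace • H t)
    (p1 : Fin d → Y → ℂ) (p2 : Fin d → Y → Fin d → Y → ℂ) (p20 : Fin d → Y → ℂ)
    (hp2sum : ∀ x1 y1 y2, ∑ x2' : Fin d, p2 x2' y2 x1 y1 = 1)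
    (hp20sum : ∀ y2, ∑ x2' : Fin d, p20 x2' y2 = 1)
    (hC1 : ∀ y1 y2 x2, ∑ x1 : Fin d, p2 x2 y2 x1 y1
        = d * p20 x2 y2 - d * ∑ t1 : Y × Fin (d - 1), ∑ t1' : Y × Fin (d - 1),
            cC g p1 t1 * (H (some t1) * H (some t1')).trace *
            (∑ x1' : Fin d, (g t1'.1 x1' t1'.2 : ℂ) * p2 x2 y2 x1' t1'.1))
    (y1 y2 : Y) (x1 x2 : Fin d) :
    ((outer (w y1 x1) ⊗ₖ outer (w y2 x2)) * ptranspose1 (ChatP y₀ g H p1 p2 p20)).trace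
      = p2 x2 y2 x1 y1 := by
  have hdne : (d : ℂ) ≠ 0 := by
    simp only [ne_eq, Nat.cast_eq_zero]; omega
  have htrE1 : (outer (w y1 x1)).trace = 1 := trace_outer_eq_one _ (by rw [horth]; simp)
  -- Step 1: expand the trace
  have hPT : ptranspose1 (ChatP y₀ g H p1 p2 p20)
      = (∑ t1 : Y × Fin (d - 1), ∑ t2 : Option (Y × Fin (d - 1)),
          Gam y₀ g p2 t1 t2 • (H (some t1) ⊗ₖ H t2))
        + ∑ t2 : Option (Y × Fin (d - 1)),
          Del y₀ g H p1 p2 p20 t2 • ((1 : Matrix (Fin d) (Fin d) ℂ) ⊗ₖ H t2) := by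
    rw [ChatP_eq, ptranspose1_add, ptranspose1_sum, ptranspose1_sum]
    congr 1
    · refine Finset.sum_congr rfl fun t1 _ => ?_
      rw [ptranspose1_sum]
      exact Finset.sum_congr rfl fun t2 _ => by rw [ptranspose1_smul, ptranspose1_kron]
    · exact Finset.sum_congr rfl fun t2 _ => by rw [ptranspose1_smul, ptranspose1_one_kron]
  have hRHS : ((outer (w y1 x1) ⊗ₖ outer (w y2 x2)) * ptranspose1 (ChatP y₀ g H p1 p2 p20)).trace
      = (∑ t1 : Y × Fin (d - 1), ∑ t2 : Option (Y × Fin (d - 1)),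
          Gam y₀ g p2 t1 t2 * ((outer (w y1 x1) * H (some t1)).trace *
            (outer (w y2 x2) * H t2).trace))
        + ∑ t2 : Option (Y × Fin (d - 1)),
          Del y₀ g H p1 p2 p20 t2 * (outer (w y2 x2) * H t2).trace := by
    rw [hPT, Matrix.mul_add, Matrix.trace_add, Matrix.mul_sum, Matrix.trace_sum,
      Matrix.mul_sum, Matrix.trace_sum]
    congr 1
    · refine Finset.sum_congr rfl fun t1 _ => ?_
      rw [Matrix.mul_sum, Matrix.trace_sum]
      refine Finset.sum_congr rfl fun t2 _ => ?_
      rw [Matrix.mul_smul, Matrix.trace_smul, ← Matrix.mul_kronecker_mul,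
        Matrix.trace_kronecker, smul_eq_mul]
    · refine Finset.sum_congr rfl fun t2 _ => ?_
      rw [Matrix.mul_smul, Matrix.trace_smul, ← Matrix.mul_kronecker_mul,
        Matrix.trace_kronecker, smul_eq_mul, Matrix.mul_one, htrE1, one_mul]
  -- Step 2: per-(x1',y1') resummation over t2
  have hMkey : ∀ (x1' : Fin d) (y1' : Y),
      ∑ t2 : Option (Y × Fin (d - 1)),
        (∑ x2' : Fin d, (gfam g t2 x2' : ℂ) * p2 x2' (yOf y₀ t2) x1' y1') *
          (outer (w y2 x2) * H t2).trace
      = p2 x2 y2 x1' y1' := by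
    intro x1' y1'
    have h1 : ∑ t2 : Option (Y × Fin (d - 1)),
        (∑ x2' : Fin d, (gfam g t2 x2' : ℂ) * p2 x2' (yOf y₀ t2) x1' y1') *
          (outer (w y2 x2) * H t2).trace
        = (outer (w y2 x2) * ∑ t2,
            (∑ x2' : Fin d, (gfam g t2 x2' : ℂ) * p2 x2' (yOf y₀ t2) x1' y1') • H t2).trace := by
      rw [trace_mul_sum_smul]
    rw [h1]
    refine lemC hd w g H horth hdual y2 _ (fun x => p2 x y2 x1' y1') ?_ ?_ x2
    · simp only [gfam, yOf, Complex.ofReal_one, one_mul]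
      rw [hp2sum x1' y1' y₀, hp2sum x1' y1' y2]
    · intro z
      simp only [gfam, yOf]
  have hNkey : ∑ t2 : Option (Y × Fin (d - 1)),
      nC y₀ g p20 t2 * (outer (w y2 x2) * H t2).trace = p20 x2 y2 := by
    have h1 : ∑ t2 : Option (Y × Fin (d - 1)),
        nC y₀ g p20 t2 * (outer (w y2 x2) * H t2).trace
        = (outer (w y2 x2) * ∑ t2, nC y₀ g p20 t2 • H t2).trace := by
      rw [trace_mul_sum_smul]
    rw [h1]
    refine lemC hd w g H horth hdual y2 _ (fun x => p20 x y2) ?_ ?_ x2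
    · simp only [nC, gfam, yOf, Complex.ofReal_one, one_mul]
      rw [hp20sum y₀, hp20sum y2]
    · intro z
      simp only [nC, gfam, yOf]
  -- Step 3: resummation of Gam over t2
  have hGam : ∀ t1 : Y × Fin (d - 1),
      ∑ t2 : Option (Y × Fin (d - 1)), Gam y₀ g p2 t1 t2 * (outer (w y2 x2) * H t2).trace
      = ∑ x1' : Fin d, (g t1.1 x1' t1.2 : ℂ) * p2 x2 y2 x1' t1.1 := by
    intro t1
    have hΓ : ∀ t2, Gam y₀ g p2 t1 t2
        = ∑ x1' : Fin d, (g t1.1 x1' t1.2 : ℂ) *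
            (∑ x2' : Fin d, (gfam g t2 x2' : ℂ) * p2 x2' (yOf y₀ t2) x1' t1.1) := by
      intro t2
      refine Finset.sum_congr rfl fun x1' _ => ?_
      rw [Finset.mul_sum]
      exact Finset.sum_congr rfl fun x2' _ => by ring
    calc ∑ t2, Gam y₀ g p2 t1 t2 * (outer (w y2 x2) * H t2).trace
        = ∑ t2, ∑ x1' : Fin d, (g t1.1 x1' t1.2 : ℂ) *
            ((∑ x2' : Fin d, (gfam g t2 x2' : ℂ) * p2 x2' (yOf y₀ t2) x1' t1.1) *
              (outer (w y2 x2) * H t2).trace) := by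
          refine Finset.sum_congr rfl fun t2 _ => ?_
          rw [hΓ t2, Finset.sum_mul]
          exact Finset.sum_congr rfl fun x1' _ => by ring
      _ = ∑ x1' : Fin d, (g t1.1 x1' t1.2 : ℂ) *
            (∑ t2, (∑ x2' : Fin d, (gfam g t2 x2' : ℂ) * p2 x2' (yOf y₀ t2) x1' t1.1) *
              (outer (w y2 x2) * H t2).trace) := by
          rw [Finset.sum_comm]
          exact Finset.sum_congr rfl fun x1' _ => by rw [Finset.mul_sum]
      _ = ∑ x1' : Fin d, (g t1.1 x1' t1.2 : ℂ) * p2 x2 y2 x1' t1.1 := by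
          exact Finset.sum_congr rfl fun x1' _ => by rw [hMkey x1' t1.1]
  -- Step 4: the Delta part
  have hDel : ∑ t2 : Option (Y × Fin (d - 1)),
      Del y₀ g H p1 p2 p20 t2 * (outer (w y2 x2) * H t2).trace
      = p20 x2 y2 - ∑ t1 : Y × Fin (d - 1), ∑ t1' : Y × Fin (d - 1),
          cC g p1 t1 * (H (some t1) * H (some t1')).trace *
          (∑ x1' : Fin d, (g t1'.1 x1' t1'.2 : ℂ) * p2 x2 y2 x1' t1'.1) := by
    have h1 : ∀ t2, Del y₀ g H p1 p2 p20 t2 * (outer (w y2 x2) * H t2).trace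
        = nC y₀ g p20 t2 * (outer (w y2 x2) * H t2).trace
          - ∑ t1 : Y × Fin (d - 1), ∑ t1' : Y × Fin (d - 1),
              cC g p1 t1 * (H (some t1) * H (some t1')).trace *
                (Gam y₀ g p2 t1' t2 * (outer (w y2 x2) * H t2).trace) := by
      intro t2
      rw [Del, sub_mul, Finset.sum_mul]
      congr 1
      refine Finset.sum_congr rfl fun t1 _ => ?_
      rw [Finset.sum_mul]
      exact Finset.sum_congr rfl fun t1' _ => by ring
    simp_rw [h1]
    rw [Finset.sum_sub_distrib, hNkey]
    congr 1
    rw [Finset.sum_comm]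
    refine Finset.sum_congr rfl fun t1 _ => ?_
    rw [Finset.sum_comm]
    refine Finset.sum_congr rfl fun t1' _ => ?_
    rw [← Finset.mul_sum, hGam t1']
  -- Step 5: use (C1)
  have hPR : p20 x2 y2 - ∑ t1 : Y × Fin (d - 1), ∑ t1' : Y × Fin (d - 1),
        cC g p1 t1 * (H (some t1) * H (some t1')).trace *
        (∑ x1' : Fin d, (g t1'.1 x1' t1'.2 : ℂ) * p2 x2 y2 x1' t1'.1)
      = (d : ℂ)⁻¹ * ∑ x1' : Fin d, p2 x2 y2 x1' y1 := by
    have h2 : (d : ℂ) * (p20 x2 y2 - ∑ t1 : Y × Fin (d - 1), ∑ t1' : Y × Fin (d - 1),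
        cC g p1 t1 * (H (some t1) * H (some t1')).trace *
        (∑ x1' : Fin d, (g t1'.1 x1' t1'.2 : ℂ) * p2 x2 y2 x1' t1'.1))
        = ∑ x1' : Fin d, p2 x2 y2 x1' y1 := by
      rw [mul_sub, ← hC1 y1 y2 x2]
    rw [← h2, inv_mul_cancel_left₀ hdne]
  -- Step 6: H none term
  have hαnone : (outer (w y1 x1) * H none).trace = (d : ℂ)⁻¹ := by
    rw [Hnone_eq hd w g H htraceless hcomplete, Matrix.mul_smul, Matrix.mul_one,
      Matrix.trace_smul, smul_eq_mul, htrE1, mul_one]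
  -- Step 7: assemble
  set φO : Option (Y × Fin (d - 1)) → ℂ := fun t =>
    match t with
    | none => ∑ x1' : Fin d, p2 x2 y2 x1' y1
    | some t1 => ∑ x1' : Fin d, (g t1.1 x1' t1.2 : ℂ) * p2 x2 y2 x1' t1.1 with hφO
  have hassemble : ((outer (w y1 x1) ⊗ₖ outer (w y2 x2)) *
      ptranspose1 (ChatP y₀ g H p1 p2 p20)).trace
      = ∑ t : Option (Y × Fin (d - 1)), φO t * (outer (w y1 x1) * H t).trace := by
    rw [hRHS, hDel, hPR, Fintype.sum_option, hαnone]
    have : ∀ t1 : Y × Fin (d - 1),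
        ∑ t2, Gam y₀ g p2 t1 t2 * ((outer (w y1 x1) * H (some t1)).trace *
          (outer (w y2 x2) * H t2).trace)
        = φO (some t1) * (outer (w y1 x1) * H (some t1)).trace := by
      intro t1
      rw [show φO (some t1) = ∑ x1' : Fin d, (g t1.1 x1' t1.2 : ℂ) * p2 x2 y2 x1' t1.1 from rfl,
        ← hGam t1, Finset.sum_mul]
      exact Finset.sum_congr rfl fun t2 _ => by ring
    simp_rw [this]
    rw [show φO none = ∑ x1' : Fin d, p2 x2 y2 x1' y1 from rfl]
    ring
  rw [hassemble]
  have h1 : ∑ t : Option (Y × Fin (d - 1)), φO t * (outer (w y1 x1) * H t).trace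
      = (outer (w y1 x1) * ∑ t, φO t • H t).trace := by
    rw [trace_mul_sum_smul]
  rw [h1]
  exact lemC hd w g H horth hdual y1 φO (fun x => p2 x2 y2 x y1) rfl (fun z => rfl) x1

end Stmt18Aux
end

/-- under (A1), (A3), the Markov condition X1−Y1−Y2, (C0), and (C1),
the observed distribution is exactly reproduced by the reconstructed pair (ρ1[P], Ĉ[P]). -/
theorem stmt18 {d : ℕ} (hd : 2 ≤ d) {Y : Type*} [Fintype Y] [DecidableEq Y] (y₀ : Y)
    (w : Y → Fin d → Fin d → ℂ)
    (g : Y → Fin d → Fin (d - 1) → ℝ)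
    (H : Option (Y × Fin (d - 1)) → Matrix (Fin d) (Fin d) ℂ)
    -- (A3): each {|x,y⟩ : x} is an orthonormal basis of ℂ^d, so each E_{x|y} is rank one
    (horth : ∀ y (x x' : Fin d), star (w y x) ⬝ᵥ w y x' = if x = x' then 1 else 0)
    -- each G_{y,z} is traceless
    (htraceless : ∀ y z, (Gfam w g (some (y, z))).trace = 0)
    -- (A1): {I} ∪ {G_{y,z}} is a basis of Herm(d), with dual basis H (Hermitian),
    -- expressed via the trace-duality and expansion properties
    (hH : ∀ t, (H t).IsHermitian)
    (hdual : ∀ t t', (Gfam w g t' * H t).trace = if t = t' then 1 else 0)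
    (hcomplete : ∀ M : Matrix (Fin d) (Fin d) ℂ, M.IsHermitian →
      M = ∑ t : Option (Y × Fin (d - 1)), (Gfam w g t * M).trace • H t)
    -- the observed family of distributions Q
    (Q : ∀ y1 y2 : Option Y, XSp d Y y1 → XSp d Y y2 → ℝ)
    (hQnonneg : ∀ y1 y2 x1 x2, 0 ≤ Q y1 y2 x1 x2)
    (hQsum : ∀ y1 y2 : Option Y, ∑ x1 : XSp d Y y1, ∑ x2 : XSp d Y y2, Q y1 y2 x1 x2 = 1)
    -- Markov condition X1−Y1−Y2: the marginal of X1 does not depend on y2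
    (hMarkov : ∀ (y1 : Option Y) (x1 : XSp d Y y1) (y2 : Option Y),
      ∑ x2 : XSp d Y y2, Q y1 y2 x1 x2 = marg Q y1 x1)
    -- (C0): full support of the first marginal
    (hC0 : ∀ (y1 : Y) (x1 : Fin d), 0 < marg Q (some y1) x1)
    -- (C1): the algebraic consistency condition
    (hC1 : ∀ (y1 y2 : Y) (x2 : Fin d),
      ∑ x1 : Fin d,
          ((Q (some y1) (some y2) x1 x2 / marg Q (some y1) x1 : ℝ) : ℂ)
        = (d : ℂ) * ((Q none (some y2) PUnit.unit x2 : ℝ) : ℂ)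
          - (d : ℂ) *
            ∑ t1 : Y × Fin (d - 1), ∑ t1' : Y × Fin (d - 1),
              (∑ x1 : Fin d, (g t1.1 x1 t1.2 : ℂ) * ((marg Q (some t1.1) x1 : ℝ) : ℂ))
                * (H (some t1) * H (some t1')).trace
                * (∑ x1' : Fin d, (g t1'.1 x1' t1'.2 : ℂ) *
                    ((Q (some t1'.1) (some y2) x1' x2 / marg Q (some t1'.1) x1' : ℝ) : ℂ))) :
    ∀ (y1 y2 : Y) (x1 x2 : Fin d),
      ((marg Q (some y1) x1 : ℝ) : ℂ)
          = (outer (w y1 x1) * rho1P g H (fun x y => marg Q (some y) x)).trace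
      ∧ ((Q (some y1) (some y2) x1 x2 / marg Q (some y1) x1 : ℝ) : ℂ)
          = ((outer (w y1 x1) ⊗ₖ outer (w y2 x2)) *
              ptranspose1 (ChatP y₀ g H
                (fun x y => ((marg Q (some y) x : ℝ) : ℂ))
                (fun x2' y2' x1' y1' =>
                  ((Q (some y1') (some y2') x1' x2' / marg Q (some y1') x1' : ℝ) : ℂ))
                (fun x2' y2' => ((Q none (some y2') PUnit.unit x2' : ℝ) : ℂ)))).trace
      ∧ ((Q (some y1) (some y2) x1 x2 : ℝ) : ℂ)
          = (outer (w y1 x1) * rho1P g H (fun x y => marg Q (some y) x)).trace *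
            ((outer (w y1 x1) ⊗ₖ outer (w y2 x2)) *
              ptranspose1 (ChatP y₀ g H
                (fun x y => ((marg Q (some y) x : ℝ) : ℂ))
                (fun x2' y2' x1' y1' =>
                  ((Q (some y1') (some y2') x1' x2' / marg Q (some y1') x1' : ℝ) : ℂ))
                (fun x2' y2' => ((Q none (some y2') PUnit.unit x2' : ℝ) : ℂ)))).trace := by
  have hp1 : ∀ y : Y, ∑ x : Fin d, marg Q (some y) x = 1 := fun y => hQsum (some y) none
  haveI : Unique (XSp d Y none) := inferInstanceAs (Unique PUnit)
  have hmnone : marg Q none PUnit.unit = 1 := by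
    have h1 : marg Q none PUnit.unit = Q none none PUnit.unit PUnit.unit := by
      show (∑ x2 : XSp d Y none, Q none none PUnit.unit x2) = _
      rw [Fintype.sum_unique]
      rfl
    have h2 := hQsum none none
    rw [Fintype.sum_unique, Fintype.sum_unique] at h2
    rw [h1]; exact h2
  have hp2sumR : ∀ (x1' : Fin d) (y1' y2' : Y),
      ∑ x2' : Fin d, Q (some y1') (some y2') x1' x2' / marg Q (some y1') x1' = 1 := by
    intro x1' y1' y2'
    refine (Finset.sum_div Finset.univ _ _).symm.trans ?_
    have hm := hMarkov (some y1') x1' (some y2')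
    rw [show (∑ x2 : XSp d Y (some y2'), Q (some y1') (some y2') x1' x2)
        = ∑ x2' : Fin d, Q (some y1') (some y2') x1' x2' from rfl] at hm
    exact (div_eq_one_iff_eq (hC0 y1' x1').ne').mpr hm
  have hp20sumR : ∀ y2' : Y, ∑ x2' : Fin d, Q none (some y2') PUnit.unit x2' = 1 := by
    intro y2'
    have hm := hMarkov none PUnit.unit (some y2')
    rw [show (∑ x2 : XSp d Y (some y2'), Q none (some y2') PUnit.unit x2)
        = ∑ x2' : Fin d, Q none (some y2') PUnit.unit x2' from rfl] at hm
    rw [hm, hmnone]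
  intro y1 y2 x1 x2
  have part1 : ((marg Q (some y1) x1 : ℝ) : ℂ)
      = (outer (w y1 x1) * rho1P g H (fun x y => marg Q (some y) x)).trace :=
    Stmt18Aux.main1 hd w g H horth hdual (fun x y => marg Q (some y) x) hp1 y1 x1
  have part2 : ((Q (some y1) (some y2) x1 x2 / marg Q (some y1) x1 : ℝ) : ℂ)
      = ((outer (w y1 x1) ⊗ₖ outer (w y2 x2)) *
          ptranspose1 (ChatP y₀ g H
            (fun x y => ((marg Q (some y) x : ℝ) : ℂ))
            (fun x2' y2' x1' y1' =>
              ((Q (some y1') (some y2') x1' x2' / marg Q (some y1') x1' : ℝ) : ℂ))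
            (fun x2' y2' => ((Q none (some y2') PUnit.unit x2' : ℝ) : ℂ)))).trace := by
    refine (Stmt18Aux.main2 hd y₀ w g H horth htraceless hdual hcomplete
      (fun x y => ((marg Q (some y) x : ℝ) : ℂ))
      (fun x2' y2' x1' y1' =>
        ((Q (some y1') (some y2') x1' x2' / marg Q (some y1') x1' : ℝ) : ℂ))
      (fun x2' y2' => ((Q none (some y2') PUnit.unit x2' : ℝ) : ℂ))
      ?_ ?_ ?_ y1 y2 x1 x2).symm
    · intro x1' y1' y2'
      rw [← Complex.ofReal_sum, hp2sumR x1' y1' y2', Complex.ofReal_one]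
    · intro y2'
      exact (Complex.ofReal_sum _ _).symm.trans
        ((congrArg Complex.ofReal (hp20sumR y2')).trans Complex.ofReal_one)
    · exact fun a b c => hC1 a b c
  refine ⟨part1, part2, ?_⟩
  rw [← part1, ← part2, ← Complex.ofReal_mul]
  congr 1
  rw [mul_comm, div_mul_cancel₀ _ (hC0 y1 x1).ne']
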